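/- Let n ∈ ℕ, let f : (Fin n → Bool) → Bool, let I ⊆ Fin n be a nonempty finite set, and let k ∈ I. Then the minimum, over orderings σ of I whose last element is k (i.e. σ(|I|−1) = k), of ∑_{j=0}^{|I|−1} w(σ({0,…,j}), σ(j)) equals MC(I∖{k}) + w(I,k). -/

import Mathlib

open Finset

def restrict (n : ℕ) (f : (Fin n → Bool) → Bool) (S : Finset (Fin n)) (b : Fin n → Bool) :
    (Fin n → Bool) → Bool :=
  fun x => f fun i => if i ∈ S then b i else x i

def EssDependsOn (n : ℕ) (g : (Fin n → Bool) → Bool) (i : Fin n) : Prop :=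
  ∃ x : Fin n → Bool, g x ≠ g (Function.update x i (!x i))

noncomputable def width (n : ℕ) (f : (Fin n → Bool) → Bool) (I : Finset (Fin n)) (i : Fin n) : ℕ :=
  Set.ncard {g : (Fin n → Bool) → Bool | EssDependsOn n g i ∧ ∃ b, g = restrict n f Iᶜ b}

noncomputable def RC (n : ℕ) (f : (Fin n → Bool) → Bool) (B J : Finset (Fin n)) : ℕ :=
  sInf { c | ∃ σ : Fin J.card ≃ {j // j ∈ J},
    c = ∑ j : Fin J.card,
          width n f (B ∪ (Finset.Iic j).image (fun t => ((σ t : {j // j ∈ J}) : Fin n))) (σ j) }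

noncomputable def MC (n : ℕ) (f : (Fin n → Bool) → Bool) (I : Finset (Fin n)) : ℕ :=
  RC n f ∅ I

noncomputable def cost (n : ℕ) (f : (Fin n → Bool) → Bool) (J : Finset (Fin n))
    (σ : Fin J.card ≃ {j // j ∈ J}) : ℕ :=
  ∑ j : Fin J.card,
    width n f ((Finset.Iic j).image (fun t => ((σ t : {j // j ∈ J}) : Fin n))) (σ j)

lemma cost_split (n : ℕ) (f : (Fin n → Bool) → Bool) (I : Finset (Fin n)) (k : Fin n)
    (hk : k ∈ I)
    (σ : Fin I.card ≃ {j // j ∈ I})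
    (τ : Fin (I.erase k).card ≃ {j // j ∈ I.erase k})
    (hc : ∀ (j : ℕ) (h1 : j < I.card) (h2 : j < (I.erase k).card),
      ((σ ⟨j, h1⟩ : {j // j ∈ I}) : Fin n) = ((τ ⟨j, h2⟩ : {j // j ∈ I.erase k}) : Fin n))
    (hlast : ∀ (h : I.card - 1 < I.card),
      ((σ ⟨I.card - 1, h⟩ : {j // j ∈ I}) : Fin n) = k) :
    cost n f I σ = cost n f (I.erase k) τ + width n f I k := by
  have hm : (I.erase k).card = I.card - 1 := Finset.card_erase_of_mem hk
  have h1 : 0 < I.card := Finset.card_pos.mpr ⟨k, hk⟩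
  set F : ℕ → ℕ := fun j =>
    if h : j < I.card then
      width n f ((Finset.Iic (⟨j, h⟩ : Fin I.card)).image
        (fun t => ((σ t : {j // j ∈ I}) : Fin n))) (σ ⟨j, h⟩)
    else 0 with hF
  set G : ℕ → ℕ := fun j =>
    if h : j < (I.erase k).card then
      width n f ((Finset.Iic (⟨j, h⟩ : Fin (I.erase k).card)).image
        (fun t => ((τ t : {j // j ∈ I.erase k}) : Fin n))) (τ ⟨j, h⟩)
    else 0 with hG
  have e1 : cost n f I σ = ∑ j ∈ Finset.range I.card, F j := by
    rw [← Fin.sum_univ_eq_sum_range F I.card, cost]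
    refine Finset.sum_congr rfl fun j _ => ?_
    simp [hF, j.isLt]
  have e2 : cost n f (I.erase k) τ = ∑ j ∈ Finset.range (I.erase k).card, G j := by
    rw [← Fin.sum_univ_eq_sum_range G (I.erase k).card, cost]
    refine Finset.sum_congr rfl fun j _ => ?_
    simp [hG, j.isLt]
  have e3 : ∑ j ∈ Finset.range I.card, F j
      = ∑ j ∈ Finset.range (I.card - 1), F j + F (I.card - 1) := by
    have := Finset.sum_range_succ F (I.card - 1)
    rw [show I.card - 1 + 1 = I.card from by omega] at this
    exact this
  have e4 : F (I.card - 1) = width n f I k := by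
    simp only [hF]
    rw [dif_pos (show I.card - 1 < I.card from by omega)]
    congr 1
    · ext x
      simp only [Finset.mem_image, Finset.mem_Iic]
      constructor
      · rintro ⟨t, _, rfl⟩; exact (σ t).2
      · intro hx
        refine ⟨σ.symm ⟨x, hx⟩, ?_, by simp⟩
        rw [Fin.le_def]
        have := (σ.symm ⟨x, hx⟩).isLt
        simpa using by omega
    · exact hlast _
  have e5 : ∀ j ∈ Finset.range (I.card - 1), F j = G j := by
    intro j hj
    rw [Finset.mem_range] at hj
    have hj1 : j < I.card := by omega
    have hj2 : j < (I.erase k).card := by omega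
    simp only [hF, hG]
    rw [dif_pos hj1, dif_pos hj2]
    congr 1
    · ext x
      simp only [Finset.mem_image, Finset.mem_Iic]
      constructor
      · rintro ⟨t, ht, rfl⟩
        have htv : (t : ℕ) ≤ j := by simpa [Fin.le_def] using ht
        have htl := t.isLt
        refine ⟨⟨t, by omega⟩, Fin.mk_le_mk.mpr htv, ?_⟩
        exact (hc t t.isLt (by omega)).symm
      · rintro ⟨t, ht, rfl⟩
        have htv : (t : ℕ) ≤ j := by simpa [Fin.le_def] using ht
        have htl := t.isLt
        refine ⟨⟨t, by omega⟩, Fin.mk_le_mk.mpr htv, ?_⟩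
        exact hc t (by omega) t.isLt
    · exact hc j hj1 hj2
  calc cost n f I σ = ∑ j ∈ Finset.range (I.card - 1), F j + F (I.card - 1) := by
        rw [e1, e3]
    _ = ∑ j ∈ Finset.range (I.card - 1), G j + width n f I k := by
        rw [Finset.sum_congr rfl e5, e4]
    _ = cost n f (I.erase k) τ + width n f I k := by rw [e2, hm]

lemma exists_sigma (n : ℕ) (f : (Fin n → Bool) → Bool) (I : Finset (Fin n)) (k : Fin n)
    (hk : k ∈ I) (τ : Fin (I.erase k).card ≃ {j // j ∈ I.erase k}) :
    ∃ σ : Fin I.card ≃ {j // j ∈ I},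
      (∀ h : I.card - 1 < I.card, ((σ ⟨I.card - 1, h⟩ : {j // j ∈ I}) : Fin n) = k) ∧
      cost n f I σ = cost n f (I.erase k) τ + width n f I k := by
  have hm : (I.erase k).card = I.card - 1 := Finset.card_erase_of_mem hk
  have h1 : 0 < I.card := Finset.card_pos.mpr ⟨k, hk⟩
  set s : Fin I.card → {j // j ∈ I} := fun j =>
    if h : (j : ℕ) < (I.erase k).card then
      ⟨((τ ⟨j, h⟩ : {j // j ∈ I.erase k}) : Fin n),
        Finset.erase_subset k I (τ ⟨j, h⟩).2⟩
    else ⟨k, hk⟩ with hs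
  have hinj : Function.Injective s := by
    intro a b hab
    by_cases ha : (a : ℕ) < (I.erase k).card <;> by_cases hb : (b : ℕ) < (I.erase k).card
    · rw [hs] at hab
      simp only [dif_pos ha, dif_pos hb] at hab
      have h2 := τ.injective (Subtype.ext (Subtype.mk_eq_mk.mp hab))
      exact Fin.val_injective (Fin.mk_eq_mk.mp h2)
    · rw [hs] at hab
      simp only [dif_pos ha, dif_neg hb] at hab
      have := (Finset.mem_erase.mp (τ ⟨a, ha⟩).2).1
      exact absurd (Subtype.mk_eq_mk.mp hab) this
    · rw [hs] at hab
      simp only [dif_neg ha, dif_pos hb] at hab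
      have := (Finset.mem_erase.mp (τ ⟨b, hb⟩).2).1
      exact absurd (Subtype.mk_eq_mk.mp hab).symm this
    · have := a.isLt; have := b.isLt
      exact Fin.val_injective (by omega)
  have hbij : Function.Bijective s := by
    rw [Fintype.bijective_iff_injective_and_card]
    exact ⟨hinj, by rw [Fintype.card_fin, Fintype.card_coe]⟩
  refine ⟨Equiv.ofBijective s hbij, ?_, ?_⟩
  · intro h
    show ((s ⟨I.card - 1, h⟩ : {j // j ∈ I}) : Fin n) = k
    rw [hs]
    simp only [dif_neg (show ¬(I.card - 1 < (I.erase k).card) from by omega)]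
  · refine cost_split n f I k hk _ τ ?_ ?_
    · intro j hj1 hj2
      show ((s ⟨j, hj1⟩ : {j // j ∈ I}) : Fin n) = _
      rw [hs]
      simp only [dif_pos hj2]
    · intro h
      show ((s ⟨I.card - 1, h⟩ : {j // j ∈ I}) : Fin n) = k
      rw [hs]
      simp only [dif_neg (show ¬(I.card - 1 < (I.erase k).card) from by omega)]

lemma exists_tau (n : ℕ) (f : (Fin n → Bool) → Bool) (I : Finset (Fin n)) (k : Fin n)
    (hk : k ∈ I) (σ : Fin I.card ≃ {j // j ∈ I})
    (hlast : ∀ h : I.card - 1 < I.card, ((σ ⟨I.card - 1, h⟩ : {j // j ∈ I}) : Fin n) = k) :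
    ∃ τ : Fin (I.erase k).card ≃ {j // j ∈ I.erase k},
      cost n f I σ = cost n f (I.erase k) τ + width n f I k := by
  have hm : (I.erase k).card = I.card - 1 := Finset.card_erase_of_mem hk
  have h1 : 0 < I.card := Finset.card_pos.mpr ⟨k, hk⟩
  have hlt : ∀ j : Fin (I.erase k).card, (j : ℕ) < I.card := fun j => by
    have := j.isLt; omega
  have hne : ∀ j : Fin (I.erase k).card,
      ((σ ⟨j, hlt j⟩ : {j // j ∈ I}) : Fin n) ≠ k := by
    intro j h
    have h2 : σ ⟨j, hlt j⟩ = σ ⟨I.card - 1, by omega⟩ :=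
      Subtype.ext (h.trans (hlast (by omega)).symm)
    have h3 := congrArg Fin.val (σ.injective h2)
    have := j.isLt
    simp only at h3
    omega
  set t : Fin (I.erase k).card → {j // j ∈ I.erase k} := fun j =>
    ⟨((σ ⟨j, hlt j⟩ : {j // j ∈ I}) : Fin n),
      Finset.mem_erase.mpr ⟨hne j, (σ ⟨j, hlt j⟩).2⟩⟩ with ht
  have hinj : Function.Injective t := by
    intro a b hab
    have hv0 := congrArg Subtype.val hab
    have hv : ((σ ⟨a, hlt a⟩ : {j // j ∈ I}) : Fin n)
        = ((σ ⟨b, hlt b⟩ : {j // j ∈ I}) : Fin n) := hv0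
    have h2 := σ.injective (Subtype.ext hv)
    exact Fin.val_injective (Fin.mk_eq_mk.mp h2)
  have hbij : Function.Bijective t := by
    rw [Fintype.bijective_iff_injective_and_card]
    exact ⟨hinj, by rw [Fintype.card_fin, Fintype.card_coe]⟩
  refine ⟨Equiv.ofBijective t hbij, ?_⟩
  refine cost_split n f I k hk σ _ ?_ hlast
  intro j hj1 hj2
  rfl

/-- The minimum, over orderings `σ` of `I` whose last element is `k`, of the total width cost
equals `MC(I \ {k}) + w(I, k)`. -/
theorem stmt_1 (n : ℕ) (f : (Fin n → Bool) → Bool) (I : Finset (Fin n)) (k : Fin n)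
    (hk : k ∈ I) :
    sInf { c | ∃ σ : Fin I.card ≃ {j // j ∈ I},
        ((σ ⟨I.card - 1, Nat.sub_lt (Finset.card_pos.mpr ⟨k, hk⟩) Nat.one_pos⟩ :
            {j // j ∈ I}) : Fin n) = k ∧
        c = ∑ j : Fin I.card,
              width n f ((Finset.Iic j).image (fun t => ((σ t : {j // j ∈ I}) : Fin n))) (σ j) }
      = MC n f (I.erase k) + width n f I k := by
  have hMC : MC n f (I.erase k) = sInf {c | ∃ τ : Fin (I.erase k).card ≃ {j // j ∈ I.erase k},
      c = cost n f (I.erase k) τ} := by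
    rw [MC, RC]
    congr 1
    simp only [Finset.empty_union, cost]

  set S := {c | ∃ τ : Fin (I.erase k).card ≃ {j // j ∈ I.erase k},
      c = cost n f (I.erase k) τ} with hS
  set A := { c | ∃ σ : Fin I.card ≃ {j // j ∈ I},
        ((σ ⟨I.card - 1, Nat.sub_lt (Finset.card_pos.mpr ⟨k, hk⟩) Nat.one_pos⟩ :
            {j // j ∈ I}) : Fin n) = k ∧
        c = ∑ j : Fin I.card,
              width n f ((Finset.Iic j).image (fun t => ((σ t : {j // j ∈ I}) : Fin n))) (σ j) }
    with hA
  have hSne : S.Nonempty := ⟨_, (I.erase k).equivFin.symm, rfl⟩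
  have hbS := Nat.sInf_mem hSne
  obtain ⟨τ0, hτ0⟩ := hbS
  obtain ⟨σ0, hσ0l, hσ0c⟩ := exists_sigma n f I k hk τ0
  have hAmem : sInf S + width n f I k ∈ A := by
    refine ⟨σ0, hσ0l _, ?_⟩
    show sInf S + width n f I k = cost n f I σ0
    rw [hσ0c, ← hτ0]
  have hle : sInf A ≤ sInf S + width n f I k := Nat.sInf_le hAmem
  have hge : sInf S + width n f I k ≤ sInf A := by
    have hAne : A.Nonempty := ⟨_, hAmem⟩
    obtain ⟨σ1, hσ1l, hσ1c⟩ := Nat.sInf_mem hAne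
    obtain ⟨τ1, hτ1⟩ := exists_tau n f I k hk σ1 (fun h => hσ1l)
    have : cost n f (I.erase k) τ1 ∈ S := ⟨τ1, rfl⟩
    have h2 : sInf S ≤ cost n f (I.erase k) τ1 := Nat.sInf_le this
    have h3 : sInf A = cost n f I σ1 := hσ1c
    omega
  rw [hMC]
  omega
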